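/- Let A be an algebraic lattice and let B be a closure system in A, that is, a subset of A closed under infima (computed in A) of arbitrary, possibly empty, subsets of B, and closed under suprema (computed in A) of nonempty upward directed subsets of B. Then B, equipped with the order induced from A, is an algebraic lattice. -/

import Mathlib

/-- An element `a` of a partially ordered set is *compact* if for every nonempty upward
directed subset `X` having a least upper bound `s` with `a ≤ s`, there exists `x ∈ X`
with `a ≤ x`. -/
def IsCompactIn {L : Type*} [PartialOrder L] (a : L) : Prop :=
  ∀ X : Set L, X.Nonempty → DirectedOn (· ≤ ·) X → ∀ s : L, IsLUB X s → a ≤ s → ∃ x ∈ X, a ≤ x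

/-- Let `A` be an algebraic lattice and let `B` be a closure system in `A`,
i.e. a subset closed under arbitrary infima (computed in `A`) and under suprema (computed in
`A`) of nonempty upward directed subsets.  Then `B`, with the induced order, is an algebraic
lattice: it is a complete lattice and every element is a join of compact elements of `B`. -/
theorem closure_system_is_algebraic {A : Type*} [CompleteLattice A] [IsCompactlyGenerated A]
    (B : Set A)
    (h_inf : ∀ s : Set A, s ⊆ B → sInf s ∈ B)
    (h_dirsup : ∀ s : Set A, s ⊆ B → s.Nonempty → DirectedOn (· ≤ ·) s → sSup s ∈ B) :
    (∀ S : Set ↥B, ∃ l : ↥B, IsLUB S l) ∧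
    (∀ b : ↥B, ∃ C : Set ↥B, (∀ c ∈ C, IsCompactIn c) ∧ IsLUB C b) := by
  -- closure operator
  set cl : A → A := fun a => sInf {x ∈ B | a ≤ x} with hcl
  have clmem : ∀ a, cl a ∈ B := fun a => h_inf _ (fun x hx => hx.1)
  have le_cl : ∀ a, a ≤ cl a := fun a => le_sInf (fun x hx => hx.2)
  have cl_le : ∀ a x, x ∈ B → a ≤ x → cl a ≤ x := fun a x hx hax => sInf_le ⟨hx, hax⟩
  have cl_eq : ∀ x ∈ B, cl x = x := fun x hx =>
    le_antisymm (cl_le x x hx le_rfl) (le_cl x)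
  constructor
  · intro S
    refine ⟨⟨sInf {x ∈ B | ∀ s ∈ S, (s : A) ≤ x}, h_inf _ (fun x hx => hx.1)⟩, ?_, ?_⟩
    · intro s hs
      exact le_sInf fun x hx => hx.2 s hs
    · intro u hu
      exact sInf_le ⟨u.2, fun s hs => hu hs⟩
  · intro b
    refine ⟨(fun k : A => (⟨cl k, clmem k⟩ : ↥B)) '' {k | IsCompactElement k ∧ k ≤ (b : A)}, ?_, ?_, ?_⟩
    · rintro c ⟨k, ⟨hk, hkb⟩, rfl⟩
      intro X hXne hXdir s hs hcs
      -- coe image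
      have hX'sub : (Subtype.val '' X : Set A) ⊆ B := by
        rintro _ ⟨x, _, rfl⟩; exact x.2
      have hX'ne : (Subtype.val '' X).Nonempty := hXne.image _
      have hX'dir : DirectedOn (· ≤ ·) (Subtype.val '' X) := by
        rintro _ ⟨x, hx, rfl⟩ _ ⟨y, hy, rfl⟩
        obtain ⟨z, hz, hxz, hyz⟩ := hXdir x hx y hy
        exact ⟨z, ⟨z, hz, rfl⟩, hxz, hyz⟩
      have hmem := h_dirsup _ hX'sub hX'ne hX'dir
      have hsup_ub : (⟨sSup (Subtype.val '' X), hmem⟩ : ↥B) ∈ upperBounds X := by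
        intro x hx
        exact le_sSup ⟨x, hx, rfl⟩
      have hs_le : (s : A) ≤ sSup (Subtype.val '' X) := hs.2 hsup_ub
      have hk_le : k ≤ sSup (Subtype.val '' X) := le_trans (le_cl k) (le_trans hcs hs_le)
      obtain ⟨x', hx', hkx'⟩ :=
        (CompleteLattice.isCompactElement_iff_le_of_directed_sSup_le A k).mp hk
          _ hX'ne hX'dir hk_le
      obtain ⟨x, hx, rfl⟩ := hx'
      refine ⟨x, hx, ?_⟩
      show cl k ≤ (x : A)
      exact cl_le k x x.2 hkx'
    · rintro _ ⟨k, ⟨hk, hkb⟩, rfl⟩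
      show cl k ≤ (b : A)
      exact cl_le k b b.2 hkb
    · intro u hu
      show (b : A) ≤ (u : A)
      rw [← sSup_compact_le_eq (b : A)]
      refine sSup_le fun k ⟨hk, hkb⟩ => ?_
      have : (⟨cl k, clmem k⟩ : ↥B) ≤ u := hu ⟨k, ⟨hk, hkb⟩, rfl⟩
      exact le_trans (le_cl k) this
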